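/- Let E ⊆ ∂T be closed and for y ∈ T write c(y) = cap^{T_y}(E ∩ ∂T_y). Then for every x ∈ T the recursive relation c(x) = (c(x₊) + c(x₋)) / (1 + c(x₊) + c(x₋)) holds, where x₊ and x₋ are the two children of x. -/

import Mathlib

open scoped ENNReal NNReal
open Filter Topology

noncomputable section

/-- The vertex set of the dyadic tree `T`: finite binary strings. The boundary `∂T`
is the set of infinite binary sequences `ℕ → Bool`. `pre ζ k` is the prefix of
length `k` of the boundary point `ζ`. -/
def pre (ζ : ℕ → Bool) (k : ℕ) : List Bool := List.ofFn (fun i : Fin k => ζ i)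

/-- The tree condenser capacity `cap^T_n(E)`: the infimum of `Σ_x φ(x)²` over
`φ : T → [0,∞)` with `Iφ(ζ) = Σ_{x ∈ P(ζ)} φ(x) ≥ 1` on `E` and `φ(x) = 0`
whenever `d(x) ≤ n-1`.  For `n = 0` this is the tree capacity `cap^T(E)`. -/
noncomputable def treeCapN (n : ℕ) (E : Set (ℕ → Bool)) : ℝ≥0∞ :=
  sInf { c | ∃ φ : List Bool → ℝ≥0,
    (∀ ζ ∈ E, 1 ≤ ∑' k : ℕ, (φ (pre ζ k) : ℝ≥0∞)) ∧
    (∀ x : List Bool, x.length < n → φ x = 0) ∧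
    c = ∑' x : List Bool, (φ x : ℝ≥0∞) ^ 2 }

/-- The tree capacity `cap^T(E)` of a set `E ⊆ ∂T`. -/
noncomputable def treeCap (E : Set (ℕ → Bool)) : ℝ≥0∞ := treeCapN 0 E

/-- `∂T_x`: the boundary points extending the vertex `x`. -/
def bdSub (x : List Bool) : Set (ℕ → Bool) := { ζ | pre ζ x.length = x }

/-- The tree capacity `cap^{T_x}(F)` computed in the subtree `T_x` rooted at `x`:
the sums `Iφ` are taken over the prefixes from `x` onward, and the energy is summed
over the vertices of `T_x` (the binary strings having `x` as a prefix). -/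
noncomputable def treeCapAt (x : List Bool) (F : Set (ℕ → Bool)) : ℝ≥0∞ :=
  sInf { c | ∃ φ : List Bool → ℝ≥0,
    (∀ ζ ∈ F, 1 ≤ ∑' k : ℕ, (φ (pre ζ (x.length + k)) : ℝ≥0∞)) ∧
    c = ∑' y : { l : List Bool // x <+: l }, (φ y : ℝ≥0∞) ^ 2 }

/-! ### Basic prefix lemmas -/

lemma pre_length (ζ : ℕ → Bool) (k : ℕ) : (pre ζ k).length = k := by
  simp [pre]

lemma pre_succ (ζ : ℕ → Bool) (m : ℕ) : pre ζ (m+1) = pre ζ m ++ [ζ m] := by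
  rw [pre, List.ofFn_succ']
  simp [List.concat_eq_append, pre, Fin.last]

lemma pre_prefix (ζ : ℕ → Bool) {m n : ℕ} (h : m ≤ n) : pre ζ m <+: pre ζ n := by
  obtain ⟨k, rfl⟩ := Nat.exists_eq_add_of_le h
  induction k with
  | zero => simp
  | succ k ih =>
    have h2 : m + (k+1) = (m+k) + 1 := by ring
    rw [h2, pre_succ]
    exact (ih (Nat.le_add_right _ _)).trans (List.prefix_append _ _)

lemma mem_bdSub_child {ζ : ℕ → Bool} {x : List Bool} {b : Bool}
    (h : ζ ∈ bdSub (x ++ [b])) : ζ ∈ bdSub x ∧ ζ x.length = b := by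
  have h' : pre ζ (x.length + 1) = x ++ [b] := by
    have := h; rwa [bdSub, Set.mem_setOf_eq, List.length_append, List.length_singleton] at this
  rw [pre_succ] at h'
  have h2 := List.append_inj h' (by simp [pre_length])
  exact ⟨h2.1, by simpa using h2.2⟩

lemma mem_bdSub_child_self {ζ : ℕ → Bool} {x : List Bool} (h : ζ ∈ bdSub x) :
    ζ ∈ bdSub (x ++ [ζ x.length]) := by
  rw [bdSub, Set.mem_setOf_eq, List.length_append, List.length_singleton, pre_succ]
  rw [bdSub, Set.mem_setOf_eq] at h
  rw [h]

lemma pre_child_prefix {ζ : ℕ → Bool} {x : List Bool} {b : Bool}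
    (h : ζ ∈ bdSub (x ++ [b])) (k : ℕ) : (x ++ [b]) <+: pre ζ ((x ++ [b]).length + k) := by
  have h' : pre ζ ((x ++ [b]).length) = x ++ [b] := h
  conv_lhs => rw [← h']
  exact pre_prefix ζ (Nat.le_add_right _ _)

/-! ### Sibling subtree disjointness and subtree splitting -/

lemma sibling_not_prefix {x l : List Bool} {b : Bool} (h : (x ++ [b]) <+: l) :
    ¬ ((x ++ [!b]) <+: l) := by
  intro h'
  have e1 := List.prefix_iff_eq_take.mp h
  have e2 := List.prefix_iff_eq_take.mp h'
  have : (x ++ [b]) = (x ++ [!b]) := by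
    rw [e1, e2]; congr 1; simp
  have := List.append_inj_right this rfl
  simp at this

lemma subtree_split {x l : List Bool} (h : x <+: l) (hne : l ≠ x) :
    (x ++ [false]) <+: l ∨ (x ++ [true]) <+: l := by
  obtain ⟨t, rfl⟩ := h
  cases t with
  | nil => simp at hne
  | cons b t =>
    cases b
    · left; exact ⟨t, by simp⟩
    · right; exact ⟨t, by simp⟩

lemma tsum_subtree (f : List Bool → ℝ≥0∞) (x : List Bool) :
    ∑' l : {l : List Bool // x <+: l}, f l
      = f x + ∑' l : {l : List Bool // (x ++ [false]) <+: l}, f l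
           + ∑' l : {l : List Bool // (x ++ [true]) <+: l}, f l := by
  have hsub : ∀ (y : List Bool), ({l | y <+: l} : Set (List Bool)).indicator f
      = fun l => if y <+: l then f l else 0 := by
    intro y; funext l; by_cases h : y <+: l <;> simp [Set.indicator, h]
  have key : ∀ l : List Bool,
      (if x <+: l then f l else 0)
      = (if l = x then f l else 0) + (if (x ++ [false]) <+: l then f l else 0)
        + (if (x ++ [true]) <+: l then f l else 0) := by
    intro l
    by_cases h : x <+: l
    · by_cases he : l = x
      · subst he
        have h1 : ¬ ((l ++ [false]) <+: l) := by
          intro hp; have := hp.length_le; simp at this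
        have h2 : ¬ ((l ++ [true]) <+: l) := by
          intro hp; have := hp.length_le; simp at this
        simp [h1, h2]
      · rcases subtree_split h he with hf | ht
        · have := sibling_not_prefix (b := false) hf
          simp only [Bool.not_false] at this
          simp [h, he, hf, this]
        · have := sibling_not_prefix (b := true) ht
          simp only [Bool.not_true] at this
          simp [h, he, ht, this]
    · have he : l ≠ x := by rintro rfl; exact h (List.prefix_refl _)
      have h1 : ¬ ((x ++ [false]) <+: l) := fun hp => h ((List.prefix_append x [false]).trans hp)
      have h2 : ¬ ((x ++ [true]) <+: l) := fun hp => h ((List.prefix_append x [true]).trans hp)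
      simp [h, he, h1, h2]
  calc ∑' l : {l : List Bool // x <+: l}, f l
      = ∑' l : List Bool, (if x <+: l then f l else 0) := by
        have h := tsum_subtype {l : List Bool | x <+: l} f
        rw [hsub] at h; exact h
    _ = ∑' l : List Bool, ((if l = x then f l else 0)
          + (if (x ++ [false]) <+: l then f l else 0)
          + (if (x ++ [true]) <+: l then f l else 0)) := tsum_congr key
    _ = f x + ∑' l : {l : List Bool // (x ++ [false]) <+: l}, f l
           + ∑' l : {l : List Bool // (x ++ [true]) <+: l}, f l := by
        rw [ENNReal.tsum_add, ENNReal.tsum_add,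
          tsum_eq_single x (fun b hb => by simp [hb])]
        have h1 := tsum_subtype {l : List Bool | (x ++ [false]) <+: l} f
        have h2 := tsum_subtype {l : List Bool | (x ++ [true]) <+: l} f
        rw [hsub] at h1 h2
        simp only at h1 h2
        rw [← h1, ← h2]
        simp
        rfl

/-! ### Splitting the path sum -/

lemma constraint_split (φ : List Bool → ℝ≥0) {ζ : ℕ → Bool} {x : List Bool} {b : Bool}
    (h : ζ ∈ bdSub (x ++ [b])) :
    ∑' k : ℕ, (φ (pre ζ (x.length + k)) : ℝ≥0∞)
      = (φ x : ℝ≥0∞) + ∑' k : ℕ, (φ (pre ζ ((x ++ [b]).length + k)) : ℝ≥0∞) := by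
  rw [tsum_eq_zero_add' ENNReal.summable]
  congr 1
  · rw [Nat.add_zero, (mem_bdSub_child h).1]
  · apply tsum_congr
    intro k
    congr 2
    simp
    ring

/-! ### Capacity is at most one -/

lemma treeCapAt_le_one (x : List Bool) (F : Set (ℕ → Bool)) (hF : F ⊆ bdSub x) :
    treeCapAt x F ≤ 1 := by
  apply sInf_le
  refine ⟨fun l => if l = x then 1 else 0, ?_, ?_⟩
  · intro ζ hζ
    have h0 : pre ζ (x.length + 0) = x := by
      rw [Nat.add_zero]; exact hF hζ
    calc (1:ℝ≥0∞) = ((if pre ζ (x.length + 0) = x then (1:ℝ≥0) else 0 : ℝ≥0) : ℝ≥0∞) := by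
          rw [if_pos h0]; simp
      _ ≤ _ := ENNReal.le_tsum 0
  · rw [tsum_eq_single (⟨x, List.prefix_refl x⟩ : {l : List Bool // x <+: l})]
    · simp
    · rintro ⟨l, hl⟩ hne
      have : l ≠ x := fun h => hne (Subtype.ext h)
      simp [this]

/-! ### The key scalar inequality -/

lemma key_ineq (t u : ℝ≥0) (h : t + u = 1) (s : ℝ≥0∞) :
    s / (1 + s) ≤ (t : ℝ≥0∞) ^ 2 + (u : ℝ≥0∞) ^ 2 * s := by
  rcases eq_or_ne s ⊤ with rfl | hs
  · simp
  · lift s to ℝ≥0 using hs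
    apply ENNReal.div_le_of_le_mul
    have hcoe : ((t:ℝ) + u = 1) := by exact_mod_cast congrArg NNReal.toReal h
    rw [show ((1:ℝ≥0∞) + ↑s) = ((1 + s : ℝ≥0) : ℝ≥0∞) by push_cast; ring]
    rw [show ((t : ℝ≥0∞) ^ 2 + (u : ℝ≥0∞) ^ 2 * ↑s) = (((t^2 + u^2 * s : ℝ≥0)) : ℝ≥0∞) by
      push_cast; ring]
    rw [← ENNReal.coe_mul, ENNReal.coe_le_coe, ← NNReal.coe_le_coe]
    push_cast
    have hu : (u:ℝ) = 1 - (t:ℝ) := by linarith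
    rw [hu]
    nlinarith [sq_nonneg ((t:ℝ) * (1 + (s:ℝ)) - (s:ℝ)), NNReal.coe_nonneg s, NNReal.coe_nonneg t]

/-! ### Lower bound -/

lemma cap_lower (E : Set (ℕ → Bool)) (x : List Bool) :
    (treeCapAt (x ++ [false]) (E ∩ bdSub (x ++ [false]))
        + treeCapAt (x ++ [true]) (E ∩ bdSub (x ++ [true])))
      / (1 + (treeCapAt (x ++ [false]) (E ∩ bdSub (x ++ [false]))
        + treeCapAt (x ++ [true]) (E ∩ bdSub (x ++ [true]))))
    ≤ treeCapAt x (E ∩ bdSub x) := by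
  set cf := treeCapAt (x ++ [false]) (E ∩ bdSub (x ++ [false])) with hcf
  set ct := treeCapAt (x ++ [true]) (E ∩ bdSub (x ++ [true])) with hct
  set s : ℝ≥0∞ := cf + ct with hs
  apply le_sInf
  rintro e ⟨φ, hcon, rfl⟩
  by_cases htc : 1 ≤ φ x
  · calc s / (1 + s) ≤ 1 := ENNReal.div_le_of_le_mul (by rw [one_mul]; exact le_add_self)
      _ ≤ ((φ x : ℝ≥0∞)) ^ 2 := by
          rw [← one_pow 2]
          exact pow_le_pow_left₀ zero_le (by exact_mod_cast htc) 2
      _ ≤ _ := ENNReal.le_tsum (⟨x, List.prefix_refl x⟩ : {l : List Bool // x <+: l})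
  · push_neg at htc
    set t := φ x with htdef
    set u : ℝ≥0 := 1 - t with hudef
    have hu : t + u = 1 := add_tsub_cancel_of_le htc.le
    have hu0 : u ≠ 0 := (tsub_pos_of_lt htc).ne'
    have hcoeu : ((u : ℝ≥0∞)) = 1 - (t : ℝ≥0∞) := by
      rw [hudef, ENNReal.coe_sub, ENNReal.coe_one]
    -- bound on each child capacity
    have child : ∀ b : Bool, (u : ℝ≥0∞) ^ 2 * treeCapAt (x ++ [b]) (E ∩ bdSub (x ++ [b]))
        ≤ ∑' l : {l : List Bool // (x ++ [b]) <+: l}, (φ l : ℝ≥0∞) ^ 2 := by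
      intro b
      set Eb := ∑' l : {l : List Bool // (x ++ [b]) <+: l}, (φ l : ℝ≥0∞) ^ 2 with hEb
      have hcb : treeCapAt (x ++ [b]) (E ∩ bdSub (x ++ [b]))
          ≤ ((u : ℝ≥0∞))⁻¹ ^ 2 * Eb := by
        apply sInf_le
        refine ⟨fun l => u⁻¹ * φ l, ?_, ?_⟩
        · intro ζ hζ
          have hsplit := constraint_split φ (b := b) hζ.2
          have h1 := hcon ζ ⟨hζ.1, (mem_bdSub_child hζ.2).1⟩
          rw [hsplit] at h1
          set S := ∑' k : ℕ, (φ (pre ζ ((x ++ [b]).length + k)) : ℝ≥0∞) with hS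
          have hSu : (u : ℝ≥0∞) ≤ S := by
            rw [hcoeu]
            exact tsub_le_iff_right.mpr (by rwa [add_comm] at h1)
          have hrw : ∑' k : ℕ, (((u⁻¹ * φ (pre ζ ((x ++ [b]).length + k)) : ℝ≥0)) : ℝ≥0∞)
              = ((u : ℝ≥0∞))⁻¹ * S := by
            rw [hS, ← ENNReal.tsum_mul_left]
            exact tsum_congr fun k => by rw [ENNReal.coe_mul, ENNReal.coe_inv hu0]
          rw [hrw]
          calc (1:ℝ≥0∞) = ((u : ℝ≥0∞))⁻¹ * (u : ℝ≥0∞) :=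
                (ENNReal.inv_mul_cancel (by exact_mod_cast hu0) ENNReal.coe_ne_top).symm
            _ ≤ _ := mul_le_mul_right hSu _
        · rw [hEb, ← ENNReal.tsum_mul_left]
          exact tsum_congr fun l => by
            rw [ENNReal.coe_mul, ENNReal.coe_inv hu0, mul_pow]
      calc (u : ℝ≥0∞) ^ 2 * treeCapAt (x ++ [b]) (E ∩ bdSub (x ++ [b]))
          ≤ (u : ℝ≥0∞) ^ 2 * (((u : ℝ≥0∞))⁻¹ ^ 2 * Eb) := mul_le_mul_right hcb _
        _ = ((u : ℝ≥0∞) * ((u : ℝ≥0∞))⁻¹) ^ 2 * Eb := by rw [mul_pow, mul_assoc]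
        _ = Eb := by
            rw [ENNReal.mul_inv_cancel (by exact_mod_cast hu0) ENNReal.coe_ne_top]
            simp
    calc s / (1 + s) ≤ (t : ℝ≥0∞) ^ 2 + (u : ℝ≥0∞) ^ 2 * s := key_ineq t u hu s
      _ = (t : ℝ≥0∞) ^ 2 + ((u : ℝ≥0∞) ^ 2 * cf + (u : ℝ≥0∞) ^ 2 * ct) := by
          rw [hs, mul_add]
      _ ≤ (t : ℝ≥0∞) ^ 2
            + (∑' l : {l : List Bool // (x ++ [false]) <+: l}, (φ l : ℝ≥0∞) ^ 2
              + ∑' l : {l : List Bool // (x ++ [true]) <+: l}, (φ l : ℝ≥0∞) ^ 2) := by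
          exact add_le_add_right (add_le_add (child false) (child true)) _
      _ = ∑' y : { l : List Bool // x <+: l }, (φ y : ℝ≥0∞) ^ 2 := by
          rw [tsum_subtree (fun l => (φ l : ℝ≥0∞) ^ 2) x, add_assoc]

/-! ### Upper bound -/

lemma cap_upper (E : Set (ℕ → Bool)) (x : List Bool) :
    treeCapAt x (E ∩ bdSub x)
      ≤ (treeCapAt (x ++ [false]) (E ∩ bdSub (x ++ [false]))
          + treeCapAt (x ++ [true]) (E ∩ bdSub (x ++ [true])))
        / (1 + (treeCapAt (x ++ [false]) (E ∩ bdSub (x ++ [false]))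
          + treeCapAt (x ++ [true]) (E ∩ bdSub (x ++ [true])))) := by
  set cf := treeCapAt (x ++ [false]) (E ∩ bdSub (x ++ [false])) with hcf
  set ct := treeCapAt (x ++ [true]) (E ∩ bdSub (x ++ [true])) with hct
  set s : ℝ≥0∞ := cf + ct with hs
  have hcb1 : ∀ b : Bool, treeCapAt (x ++ [b]) (E ∩ bdSub (x ++ [b])) ≤ 1 :=
    fun b => treeCapAt_le_one _ _ Set.inter_subset_right
  have hstop : s ≠ ⊤ :=
    ((add_le_add (hcb1 false) (hcb1 true)).trans_lt (by norm_num)).ne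
  apply ENNReal.le_of_forall_pos_le_add
  intro ε hε _
  set sN := s.toNNReal with hsN
  have hsco : (sN : ℝ≥0∞) = s := ENNReal.coe_toNNReal hstop
  set t : ℝ≥0 := sN / (1 + sN) with htdef
  set u : ℝ≥0 := 1 / (1 + sN) with hudef
  have hden : (1 + sN : ℝ≥0) ≠ 0 := by positivity
  have htu : t + u = 1 := by
    rw [htdef, hudef, ← add_div, add_comm sN 1, div_self hden]
  have hu1 : u ≤ 1 := by
    rw [hudef, div_le_one₀ (by positivity)]
    exact le_add_of_nonneg_right zero_le
  -- the exact identity t² + u² s = s/(1+s)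
  have hiden : (t : ℝ≥0∞) ^ 2 + (u : ℝ≥0∞) ^ 2 * s = s / (1 + s) := by
    rw [← hsco]
    have hkey : (t ^ 2 + u ^ 2 * sN : ℝ≥0) = sN / (1 + sN) := by
      rw [htdef, hudef, ← NNReal.coe_inj]
      push_cast
      have h1 : ((1:ℝ) + sN) ≠ 0 := by positivity
      field_simp
      ring
    calc (t : ℝ≥0∞) ^ 2 + (u : ℝ≥0∞) ^ 2 * (sN : ℝ≥0∞)
        = ((t ^ 2 + u ^ 2 * sN : ℝ≥0) : ℝ≥0∞) := by push_cast; ring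
      _ = ((sN / (1 + sN) : ℝ≥0) : ℝ≥0∞) := by rw [hkey]
      _ = (sN : ℝ≥0∞) / ((1 + sN : ℝ≥0) : ℝ≥0∞) := ENNReal.coe_div hden
      _ = (sN : ℝ≥0∞) / (1 + (sN : ℝ≥0∞)) := by push_cast; ring_nf
  -- pick near-optimizers for the children
  have hchoice : ∀ b : Bool, ∃ φ : List Bool → ℝ≥0,
      (∀ ζ ∈ E ∩ bdSub (x ++ [b]),
        1 ≤ ∑' k : ℕ, (φ (pre ζ ((x ++ [b]).length + k)) : ℝ≥0∞)) ∧
      ∑' l : {l : List Bool // (x ++ [b]) <+: l}, (φ l : ℝ≥0∞) ^ 2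
        ≤ treeCapAt (x ++ [b]) (E ∩ bdSub (x ++ [b])) + (ε / 2 : ℝ≥0) := by
    intro b
    have hlt : treeCapAt (x ++ [b]) (E ∩ bdSub (x ++ [b]))
        < treeCapAt (x ++ [b]) (E ∩ bdSub (x ++ [b])) + (ε / 2 : ℝ≥0) :=
      ENNReal.lt_add_right (((hcb1 b).trans_lt (by norm_num)).ne)
        (by exact_mod_cast (half_pos hε).ne')
    rw [treeCapAt] at hlt
    obtain ⟨a, hmem, ha⟩ := sInf_lt_iff.mp hlt
    obtain ⟨φ, hφ, rfl⟩ := hmem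
    exact ⟨φ, hφ, ha.le⟩
  choose ψ hψ hψe using hchoice
  set Φ : List Bool → ℝ≥0 := fun l =>
    if l = x then t
    else if (x ++ [false]) <+: l then u * ψ false l
    else if (x ++ [true]) <+: l then u * ψ true l
    else 0 with hΦdef
  have hΦx : Φ x = t := if_pos rfl
  have hΦb : ∀ (b : Bool) (l : List Bool), (x ++ [b]) <+: l → Φ l = u * ψ b l := by
    intro b l hl
    have hne : l ≠ x := by
      intro h; subst h
      have := hl.length_le; simp at this
    cases b
    · simp [hΦdef, hne, hl]
    · have hnf : ¬ ((x ++ [false]) <+: l) := by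
        have := sibling_not_prefix (b := true) hl
        simpa using this
      simp [hΦdef, hne, hnf, hl]
  have hmem : treeCapAt x (E ∩ bdSub x)
      ≤ ∑' y : { l : List Bool // x <+: l }, (Φ y : ℝ≥0∞) ^ 2 := by
    apply sInf_le
    refine ⟨Φ, ?_, rfl⟩
    intro ζ hζ
    have hmemb : ζ ∈ bdSub (x ++ [ζ x.length]) := mem_bdSub_child_self hζ.2
    set b := ζ x.length with hb
    rw [constraint_split Φ hmemb, hΦx]
    have h2 : ∑' k : ℕ, (Φ (pre ζ ((x ++ [b]).length + k)) : ℝ≥0∞)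
        = (u : ℝ≥0∞) * ∑' k : ℕ, (ψ b (pre ζ ((x ++ [b]).length + k)) : ℝ≥0∞) := by
      rw [← ENNReal.tsum_mul_left]
      exact tsum_congr fun k => by
        rw [hΦb b _ (pre_child_prefix hmemb k), ENNReal.coe_mul]
    rw [h2]
    have h3 : 1 ≤ ∑' k : ℕ, (ψ b (pre ζ ((x ++ [b]).length + k)) : ℝ≥0∞) :=
      hψ b ζ ⟨hζ.1, hmemb⟩
    calc (1:ℝ≥0∞) = (t : ℝ≥0∞) + (u : ℝ≥0∞) := by
          rw [← ENNReal.coe_add, htu, ENNReal.coe_one]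
      _ ≤ _ := by
          apply add_le_add_right
          calc (u : ℝ≥0∞) = (u : ℝ≥0∞) * 1 := (mul_one _).symm
            _ ≤ _ := mul_le_mul_right h3 _
  have hen : ∑' y : { l : List Bool // x <+: l }, (Φ y : ℝ≥0∞) ^ 2
      = (t : ℝ≥0∞) ^ 2
        + ((u : ℝ≥0∞) ^ 2 * ∑' l : {l : List Bool // (x ++ [false]) <+: l}, (ψ false l : ℝ≥0∞) ^ 2
          + (u : ℝ≥0∞) ^ 2 * ∑' l : {l : List Bool // (x ++ [true]) <+: l}, (ψ true l : ℝ≥0∞) ^ 2) := by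
    rw [tsum_subtree (fun l => (Φ l : ℝ≥0∞) ^ 2) x, hΦx, add_assoc]
    congr 1
    congr 1
    · rw [← ENNReal.tsum_mul_left]
      exact tsum_congr fun l => by
        rw [hΦb false _ l.2, ENNReal.coe_mul, mul_pow]
    · rw [← ENNReal.tsum_mul_left]
      exact tsum_congr fun l => by
        rw [hΦb true _ l.2, ENNReal.coe_mul, mul_pow]
  calc treeCapAt x (E ∩ bdSub x)
      ≤ (t : ℝ≥0∞) ^ 2
        + ((u : ℝ≥0∞) ^ 2 * (cf + (ε / 2 : ℝ≥0)) + (u : ℝ≥0∞) ^ 2 * (ct + (ε / 2 : ℝ≥0))) := by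
        refine hmem.trans ?_
        rw [hen]
        exact add_le_add_right (add_le_add (mul_le_mul_right (hψe false) _)
          (mul_le_mul_right (hψe true) _)) _
    _ = (t : ℝ≥0∞) ^ 2 + (u : ℝ≥0∞) ^ 2 * s + (u : ℝ≥0∞) ^ 2 * ((ε / 2 : ℝ≥0) + (ε / 2 : ℝ≥0)) := by
        rw [hs]; ring
    _ ≤ s / (1 + s) + (ε : ℝ≥0∞) := by
        rw [hiden]
        apply add_le_add_right
        calc (u : ℝ≥0∞) ^ 2 * ((ε / 2 : ℝ≥0) + (ε / 2 : ℝ≥0))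
            ≤ 1 * ((ε / 2 : ℝ≥0) + (ε / 2 : ℝ≥0)) := by
              apply mul_le_mul_left
              calc (u : ℝ≥0∞) ^ 2 ≤ 1 ^ 2 :=
                    pow_le_pow_left₀ zero_le (by exact_mod_cast hu1) 2
                _ = 1 := one_pow 2
          _ = (ε : ℝ≥0∞) := by
              rw [one_mul, ← ENNReal.coe_add, add_halves]

/-- Let `E ⊆ ∂T` be closed and write
`c(y) = cap^{T_y}(E ∩ ∂T_y)`. Then for every `x ∈ T`,
`c(x) = (c(x₊) + c(x₋)) / (1 + c(x₊) + c(x₋))`, where `x₊ = x ++ [false]` and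
`x₋ = x ++ [true]` are the two children of `x`. -/
theorem tree_capacity_recursion (E : Set (ℕ → Bool)) (hE : IsClosed E)
    (x : List Bool) :
    treeCapAt x (E ∩ bdSub x)
      = (treeCapAt (x ++ [false]) (E ∩ bdSub (x ++ [false]))
          + treeCapAt (x ++ [true]) (E ∩ bdSub (x ++ [true])))
        / (1 + treeCapAt (x ++ [false]) (E ∩ bdSub (x ++ [false]))
          + treeCapAt (x ++ [true]) (E ∩ bdSub (x ++ [true]))) := by
  rw [add_assoc]
  exact le_antisymm (cap_upper E x) (cap_lower E x)
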